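/- Let F : Y → [0, +∞) be convex and Fréchet differentiable with gradient ∇F, let J : X → ℝ ∪ {+∞} be proper and convex, and let u† ∈ X with F(Ku†) = 0 (exact data). Suppose the Bregman iterates satisfy, for all k ≥ 1: p^{k−1} ∈ ∂J(u^{k−1}) and p^k := p^{k−1} − K*∇F(Ku^k) ∈ ∂J(u^k), and suppose the initialization satisfies D_J^{p⁰}(u†, u⁰) < ∞. Then for every N ≥ 1 one has ∑_{k=1}^{N} F(Ku^k) ≤ D_J^{p⁰}(u†, u⁰); in particular ∑_{k=1}^{∞} F(Ku^k) < ∞. -/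

import Mathlib

open scoped RealInnerProductSpace

/-- Subgradient of an extended-real-valued convex function:
p ∈ ∂J(v) means J(w) ≥ J(v) + ⟨p, w − v⟩ for all w. -/
def ESubgradAt {X : Type*} [NormedAddCommGroup X] [InnerProductSpace ℝ X]
    (J : X → EReal) (p v : X) : Prop :=
  ∀ w, J v + (⟪p, w - v⟫ : ℝ) ≤ J w

/-- Generalized Bregman distance D_J^p(u, v) := J(u) − J(v) − ⟨p, u − v⟩. -/
noncomputable def ebreg {X : Type*} [NormedAddCommGroup X] [InnerProductSpace ℝ X]
    (J : X → EReal) (p u v : X) : EReal :=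
  J u - J v - (⟪p, u - v⟫ : ℝ)

lemma grad_ineq {Y : Type*} [NormedAddCommGroup Y] [InnerProductSpace ℝ Y] [CompleteSpace Y]
    {F : Y → ℝ} {g y : Y} (h : HasGradientAt F g y) (hc : ConvexOn ℝ Set.univ F) (w : Y) :
    F y + ⟪g, w - y⟫ ≤ F w := by
  set φ : ℝ → ℝ := fun t => F (y + t • (w - y)) with hφ
  have hcurve : HasDerivAt (fun t : ℝ => y + t • (w - y)) (w - y) 0 := by
    simpa using ((hasDerivAt_id (0:ℝ)).smul_const (w - y)).const_add y
  have hderiv : HasDerivAt φ ⟪g, w - y⟫ 0 := by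
    have := HasFDerivAt.comp_hasDerivAt 0 (by simpa using h.hasFDerivAt) hcurve
    simp at this
    exact this
  have hslope : Filter.Tendsto (slope φ 0) (nhdsWithin 0 (Set.Ioi 0)) (nhds ⟪g, w - y⟫) :=
    (hasDerivAt_iff_tendsto_slope.mp hderiv).mono_left
      (nhdsWithin_mono _ (fun t ht => ne_of_gt ht))
  have hbound : ⟪g, w - y⟫ ≤ F w - F y := by
    refine le_of_tendsto hslope ?_
    filter_upwards [Ioc_mem_nhdsGT_of_mem (Set.mem_Ico.mpr ⟨le_refl (0:ℝ), one_pos⟩)] with t ht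
    have h1 : φ t ≤ (1 - t) * F y + t * F w := by
      have := hc.2 (Set.mem_univ y) (Set.mem_univ w) (by linarith [ht.2] : (0:ℝ) ≤ 1 - t)
        (le_of_lt ht.1) (by ring)
      have heq : (1 - t) • y + t • w = y + t • (w - y) := by
        simp [smul_sub, sub_smul]; abel
      simpa [heq] using this
    rw [slope_def_field, sub_zero, div_le_iff₀ ht.1]
    have h0 : φ 0 = F y := by simp [φ]
    nlinarith [h1, h0]
  linarith

/-- **Summability of the fidelities along the Bregman iteration for exact data.**
F : Y → [0, ∞) convex Fréchet differentiable with gradient ∇F, J proper convex,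
F(Ku†) = 0 (exact data). If the Bregman iterates satisfy p^k ∈ ∂J(u^k) with
p^k = p^{k−1} − K*∇F(Ku^k) for k ≥ 1, and D_J^{p⁰}(u†, u⁰) < ∞, then
∑_{k=1}^{N} F(Ku^k) ≤ D_J^{p⁰}(u†, u⁰) for all N ≥ 1; in particular
∑_{k=1}^{∞} F(Ku^k) < ∞. -/
theorem stmt_10
    {X Y : Type*} [NormedAddCommGroup X] [InnerProductSpace ℝ X] [CompleteSpace X]
    [NormedAddCommGroup Y] [InnerProductSpace ℝ Y] [CompleteSpace Y]
    (K : X →L[ℝ] Y)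
    (F : Y → ℝ) (gF : Y → Y)
    (hFgrad : ∀ y, HasGradientAt F (gF y) y)
    (hFconv : ConvexOn ℝ Set.univ F) (hFnonneg : ∀ y, 0 ≤ F y)
    (J : X → EReal)
    (hJbot : ∀ u, J u ≠ ⊥)
    (hJproper : ∃ u, J u ≠ ⊤)
    (hJconv : ∀ u v : X, ∀ t : ℝ, 0 ≤ t → t ≤ 1 →
      J (t • u + (1 - t) • v) ≤ (t : EReal) * J u + ((1 - t : ℝ) : EReal) * J v)
    (udag : X) (hexact : F (K udag) = 0)
    (u p : ℕ → X)
    (hsub : ∀ k, ESubgradAt J (p k) (u k))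
    (hrec : ∀ k : ℕ, 1 ≤ k → p k = p (k - 1) - ContinuousLinearMap.adjoint K (gF (K (u k))))
    (hinit : ebreg J (p 0) udag (u 0) < ⊤) :
    (∀ N : ℕ, 1 ≤ N →
        ((∑ k ∈ Finset.Icc 1 N, F (K (u k)) : ℝ) : EReal) ≤ ebreg J (p 0) udag (u 0))
    ∧ Summable (fun k : ℕ => F (K (u (k + 1)))) := by
  obtain ⟨w0, hw0⟩ := hJproper
  -- J (u k) is finite
  have hfin : ∀ k, J (u k) ≠ ⊤ := by
    intro k h
    have h2 := hsub k w0
    rw [h] at h2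
    rw [EReal.top_add_coe] at h2
    exact hw0 (top_le_iff.mp h2)
  set a : ℕ → ℝ := fun k => (J (u k)).toReal with ha
  have hJa : ∀ k, J (u k) = ((a k : ℝ) : EReal) := fun k =>
    (EReal.coe_toReal (hfin k) (hJbot _)).symm
  -- J udag is finite
  have hdagtop : J udag ≠ ⊤ := by
    intro h
    rw [ebreg, h, hJa 0, EReal.top_sub_coe, EReal.top_sub_coe] at hinit
    exact (lt_irrefl _) hinit
  set c : ℝ := (J udag).toReal with hc
  have hJc : J udag = ((c : ℝ) : EReal) := (EReal.coe_toReal hdagtop (hJbot _)).symm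
  have hbreg : ebreg J (p 0) udag (u 0) = ((c - a 0 - ⟪p 0, udag - u 0⟫ : ℝ) : EReal) := by
    rw [ebreg, hJc, hJa 0, ← EReal.coe_sub, ← EReal.coe_sub]
  -- real subgradient inequalities
  have hsubR : ∀ k (w : X) (r : ℝ), J w = ((r : ℝ) : EReal) →
      a k + ⟪p k, w - u k⟫ ≤ r := by
    intro k w r hw
    have := hsub k w
    rw [hw, hJa k, ← EReal.coe_add] at this
    exact_mod_cast this
  set D : ℕ → ℝ := fun k => c - a k - ⟪p k, udag - u k⟫ with hD
  have hDnonneg : ∀ k, 0 ≤ D k := by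
    intro k
    have := hsubR k udag c hJc
    simp only [hD]; linarith
  -- key one-step estimate
  have hkey : ∀ k : ℕ, F (K (u (k + 1))) ≤ D k - D (k + 1) := by
    intro k
    have hg := grad_ineq (hFgrad (K (u (k + 1)))) hFconv (K udag)
    rw [hexact] at hg
    have hadj : ⟪gF (K (u (k + 1))), K udag - K (u (k + 1))⟫
        = ⟪ContinuousLinearMap.adjoint K (gF (K (u (k + 1)))), udag - u (k + 1)⟫ := by
      rw [ContinuousLinearMap.adjoint_inner_left, map_sub]
    have hpk : ContinuousLinearMap.adjoint K (gF (K (u (k + 1)))) = p k - p (k + 1) := by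
      have := hrec (k + 1) (Nat.le_add_left 1 k)
      simp only [Nat.add_sub_cancel] at this
      rw [this]; abel
    rw [hadj, hpk] at hg
    have hsg := hsubR k (u (k + 1)) (a (k + 1)) (hJa (k + 1))
    simp only [hD, inner_sub_left, inner_sub_right] at hg hsg ⊢
    linarith
  -- partial sums bound
  have hsumR : ∀ N : ℕ, (∑ k ∈ Finset.range N, F (K (u (k + 1)))) ≤ D 0 := by
    intro N
    have h1 : (∑ k ∈ Finset.range N, F (K (u (k + 1))))
        ≤ ∑ k ∈ Finset.range N, (D k - D (k + 1)) :=
      Finset.sum_le_sum fun k _ => hkey k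
    rw [Finset.sum_range_sub' D N] at h1
    have := hDnonneg N
    linarith
  constructor
  · intro N hN
    rw [hbreg]
    have hIcc : (∑ k ∈ Finset.Icc 1 N, F (K (u k)))
        = ∑ k ∈ Finset.range N, F (K (u (k + 1))) := by
      rw [← Finset.Ico_add_one_right_eq_Icc, Finset.sum_Ico_eq_sum_range]
      simp [add_comm]
    rw [hIcc]
    exact_mod_cast hsumR N
  · exact summable_of_sum_range_le (fun k => hFnonneg _) hsumR
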